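/- In the formal power series ring ℤ[x,y][[q]], the series ∑_λ m(λ)·x^{ℓ_d(λ)}·y^{ℓ_d^o(λ)}·q^{|λ|}, summed over all partitions λ into odd parts (including the empty partition), equals the infinite product ∏_{m≥1} ( 1 + 2x·q^{4m−2}/(1−q^{4m−2})² + xy·q^{2m−1}(1+q^{4m−2})/(1−q^{4m−2})² ). -/

import Mathlib

/-- The coefficient ring `ℤ[x,y]`. -/
noncomputable abbrev Rxy : Type := MvPolynomial (Fin 2) ℤ

/-- The variable `x` of `ℤ[x,y]`. -/
noncomputable def xv : Rxy := MvPolynomial.X 0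

/-- The variable `y` of `ℤ[x,y]`. -/
noncomputable def yv : Rxy := MvPolynomial.X 1

/-- `m(λ)`: the product of the multiplicities of the distinct part sizes of a partition,
i.e. the number of PDO designations of `λ`. -/
def pdoWeight {n : ℕ} (l : n.Partition) : ℕ :=
  ∏ a ∈ l.parts.toFinset, l.parts.count a

/-- `ℓ_d(λ)`: the number of distinct part sizes of a partition. -/
def numDistinct {n : ℕ} (l : n.Partition) : ℕ :=
  l.parts.toFinset.card

/-- `ℓ_d^o(λ)`: the number of distinct part sizes of `λ` occurring an odd number of times. -/
def numOddDistinct {n : ℕ} (l : n.Partition) : ℕ :=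
  (l.parts.toFinset.filter fun a => Odd (l.parts.count a)).card

/-- The series `∑_λ m(λ) x^{ℓ_d(λ)} y^{ℓ_d^o(λ)} q^{|λ|}` over partitions into odd parts,
i.e. `P₁(x,y,q)`, as a power series in `q` over `ℤ[x,y]`. -/
noncomputable def P1 : PowerSeries Rxy :=
  PowerSeries.mk fun n =>
    ∑ l ∈ Nat.Partition.odds n,
      (pdoWeight l : Rxy) * xv ^ numDistinct l * yv ^ numOddDistinct l

/-- The `m`-th factor (`m ≥ 1`) of the product:
`1 + 2x q^{4m-2}/(1-q^{4m-2})² + xy q^{2m-1}(1+q^{4m-2})/(1-q^{4m-2})²`.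
`Ring.inverse` yields the genuine inverse since `(1-q^{4m-2})²` is a unit. -/
noncomputable def factor1 (m : ℕ) : PowerSeries Rxy :=
  1 +
    2 * PowerSeries.C xv * PowerSeries.X ^ (4 * m - 2) *
      Ring.inverse ((1 - PowerSeries.X ^ (4 * m - 2)) ^ 2) +
    PowerSeries.C (xv * yv) *
      (PowerSeries.X ^ (2 * m - 1) * (1 + PowerSeries.X ^ (4 * m - 2))) *
      Ring.inverse ((1 - PowerSeries.X ^ (4 * m - 2)) ^ 2)

/-- The infinite product `∏_{m ≥ 1} factor1 m`, defined coefficientwise: since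
`factor1 m = 1 + O(q^{2m-1})`, the coefficient of `q^n` is that of any sufficiently long
partial product, e.g. `∏_{m=1}^{n+1}`. -/
noncomputable def prod1 : PowerSeries Rxy :=
  PowerSeries.mk fun n =>
    PowerSeries.coeff n (∏ m ∈ Finset.range (n + 1), factor1 (m + 1))

noncomputable def wgt : ℕ → Rxy := fun c => if c = 0 then 1 else (c : Rxy) * xv * yv ^ (c % 2)

noncomputable def Fser (b : ℕ) : PowerSeries Rxy :=
  PowerSeries.mk fun k => if b ∣ k then wgt (k / b) else 0

open PowerSeries Finset in
theorem key_poly (b : ℕ) (hb : 0 < b) :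
    ((1 : PowerSeries Rxy) - X ^ (2*b))^2 * Fser b
      = (1 - X ^ (2*b))^2 + 2 * C xv * X ^ (2*b)
        + C (xv*yv) * (X ^ b * (1 + X ^ (2*b))) := by
  have h2 : (C (2 : Rxy) : PowerSeries Rxy) = 2 := map_ofNat _ 2
  have expand : ((1 : PowerSeries Rxy) - X ^ (2*b))^2 * Fser b
      = Fser b - C 2 * (Fser b * (X ^ (2*b))) + Fser b * (X^(2*b) * X^(2*b)) := by
    rw [h2]; ring
  have rhs : ((1:PowerSeries Rxy) - X ^ (2*b))^2 + 2 * C xv * X ^ (2*b)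
        + C (xv*yv) * (X ^ b * (1 + X ^ (2*b)))
      = 1 - C 2 * X^(2*b) + X^(2*b) * X^(2*b) + C 2 * C xv * X^(2*b)
        + C (xv*yv) * X^b + C (xv*yv) * (X^b * X^(2*b)) := by
    rw [h2]; ring
  rw [expand, rhs, ← pow_add, ← pow_add]
  apply PowerSeries.ext; intro n
  simp only [map_add, map_sub, map_mul, coeff_mul_X_pow', Fser, coeff_mk, coeff_one,
    coeff_X_pow, coeff_C_mul]
  rw [PowerSeries.coeff_C]
  simp only [PowerSeries.coeff_C]
  by_cases hd : b ∣ n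
  · obtain ⟨c, rfl⟩ := hd
    have hle : ∀ k, (b*k ≤ b*c ↔ k ≤ c) := fun k =>
      ⟨fun h => Nat.le_of_mul_le_mul_left h hb, fun h => Nat.mul_le_mul_left b h⟩
    have heq : ∀ k, (b*c = b*k ↔ c = k) := fun k =>
      ⟨fun h => Nat.eq_of_mul_eq_mul_left hb h, fun h => by rw [h]⟩
    have hsub : ∀ k, b*c - b*k = b*(c-k) := fun k => (Nat.mul_sub b c k).symm
    rw [show 2*b = b*2 by ring]
    rw [show b*2 + b*2 = b*4 by ring]
    rw [show b + b*2 = b*3 by ring]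
    have hle1 : (b ≤ b * c) ↔ 1 ≤ c := by
      rw [show b ≤ b*c ↔ b*1 ≤ b*c from by rw [mul_one]]
      exact hle 1
    have hsub1 : b * c - b = b * (c-1) := by
      have := hsub 1; rwa [mul_one] at this
    simp only [hle, hle1, heq, hsub, hsub1, Nat.mul_div_cancel_left _ hb, dvd_mul_right, if_true,
      Nat.mul_eq_zero, hb.ne', false_or]
    rcases c with _|_|_|_|_|c
    · simp [wgt]
    · simp [wgt]
    · simp [wgt]; ring
    · simp [wgt]; ring
    · simp [wgt]; ring
    · have e1 : (c+5) % 2 = (c+1) % 2 := by omega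
      have e2 : (c+3) % 2 = (c+1) % 2 := by omega
      have g1 : 2 ≤ c + 5 := by omega
      have g2 : 4 ≤ c + 5 := by omega
      simp only [wgt, if_pos g1, if_pos g2, show c+5-2 = c+3 from rfl, show c+5-4 = c+1 from rfl,
        show c+5 ≠ 0 by omega, show c+3 ≠ 0 by omega, show c+1 ≠ 0 by omega, if_false,
        show ¬(c+5 = 0) by omega, show ¬(c+5 = 2) by omega, show ¬(c+5 = 4) by omega,
        show ¬(c+5 = 1) by omega, show ¬(c+5 = 3) by omega, ite_false, e1, e2]
      push_cast
      ring
  · have key : ∀ t, b ∣ t → t ≤ n → ¬ b ∣ n - t := fun t ht hle hdd => hd (by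
      have := Nat.dvd_add hdd ht
      rwa [Nat.sub_add_cancel hle] at this)
    have hne : ∀ k, n ≠ b * k := fun k h => hd ⟨k, h⟩
    have h0 : ¬ (n = 0) := fun h => hd (h ▸ dvd_zero b)
    rw [if_neg hd, if_neg h0]
    rw [show (if 2*b ≤ n then (if b ∣ n - 2*b then wgt ((n - 2*b)/b) else 0) else 0) = 0 by
      split_ifs with u v
      · exact absurd v (key _ ⟨2, by ring⟩ u)
      · rfl
      · rfl]
    rw [show (if 2*b + 2*b ≤ n then (if b ∣ n - (2*b+2*b) then wgt ((n - (2*b+2*b))/b) else 0) else 0) = 0 by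
      split_ifs with u v
      · exact absurd v (key _ ⟨4, by ring⟩ u)
      · rfl
      · rfl]
    rw [show (if 2*b ≤ n then (if n - 2*b = 0 then (2:Rxy) else 0) else 0) = 0 by
      split_ifs with u v
      · exact absurd (show n = b*2 by omega) (hne 2)
      · rfl
      · rfl]
    rw [show (if 2*b ≤ n then 2 * (if n - 2*b = 0 then xv else 0) else 0) = 0 by
      split_ifs with u v
      · exact absurd (show n = b*2 by omega) (hne 2)
      · simp
      · rfl]
    rw [show (if n = 2*b + 2*b then (1:Rxy) else 0) = 0 from
      if_neg (fun h => hne 4 (by omega))]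
    rw [show (if b ≤ n then xv * (if n - b = 0 then yv else 0) else 0) = 0 by
      split_ifs with u v
      · exact absurd (show n = b*1 by omega) (hne 1)
      · simp
      · rfl]
    rw [show (if b + 2*b ≤ n then xv * (if n - (b+2*b) = 0 then yv else 0) else 0) = 0 by
      split_ifs with u v
      · exact absurd (show n = b*3 by omega) (hne 3)
      · simp
      · rfl]
    ring

open Finset PowerSeries in
theorem weighted_prop (n : ℕ) (s : Finset ℕ) (hs : ∀ i ∈ s, 0 < i)
    (w : ℕ → Rxy) (hw : w 0 = 1) :
    coeff n (∏ i ∈ s, PowerSeries.mk fun k => if i ∣ k then w (k / i) else 0)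
      = ∑ p ∈ Finset.univ.filter fun p : n.Partition => ∀ j ∈ p.parts, j ∈ s,
          ∏ i ∈ s, w (p.parts.count i) := by
  classical
  rw [coeff_prod]
  simp_rw [coeff_mk, Finset.prod_ite_zero]
  rw [← Finset.sum_filter]
  symm
  set φ : (p : n.Partition) →
      p ∈ Finset.univ.filter (fun p : n.Partition => ∀ j ∈ p.parts, j ∈ s) → (ℕ →₀ ℕ) :=
    fun p _ => {
      toFun := fun i => p.parts.count i • i
      support := Finset.filter (fun i => i ≠ 0) p.parts.toFinset
      mem_support_toFun := fun a => by
        simp only [smul_eq_mul, ne_eq, mul_eq_zero, Multiset.count_eq_zero]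
        rw [not_or, not_not]
        simp only [Multiset.mem_toFinset, not_not, mem_filter] }
  apply Finset.sum_bij φ
  · intro a ha
    simp only [φ, mem_filter]
    rw [mem_finsuppAntidiag]
    dsimp only [ne_eq, smul_eq_mul, Finsupp.coe_mk]
    simp only [mem_univ, true_and, mem_filter] at ha
    refine ⟨⟨?_, fun i hi => ?_⟩, fun i hi => dvd_mul_left i _⟩
    · conv_rhs => simp [← a.parts_sum]
      rw [Finset.sum_multiset_count_of_subset _ s]
      · simp only [smul_eq_mul]
      · intro i
        simp only [Multiset.mem_toFinset, not_not, mem_filter]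
        apply ha
    · simp only [ne_eq, Multiset.mem_toFinset, not_not, mem_filter] at hi
      exact ha i hi.1
  · intro p₁ hp₁ p₂ hp₂ h
    apply Nat.Partition.ext
    simp only [mem_univ, true_and, mem_filter] at hp₁ hp₂
    ext i
    simp only [φ, ne_eq, Multiset.mem_toFinset, not_not, smul_eq_mul, Finsupp.mk.injEq] at h
    by_cases hi : i = 0
    · rw [hi]
      rw [Multiset.count_eq_zero_of_notMem]
      · rw [Multiset.count_eq_zero_of_notMem]
        intro a; exact Nat.lt_irrefl 0 (hs 0 (hp₂ 0 a))
      intro a; exact Nat.lt_irrefl 0 (hs 0 (hp₁ 0 a))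
    · rw [← mul_left_inj' hi]
      rw [funext_iff] at h
      exact h.2 i
  · simp only [φ, mem_filter, mem_finsuppAntidiag, mem_univ, true_and, and_assoc]
    rintro f ⟨hf₁, hf₃, hf₄⟩
    refine ⟨⟨∑ i ∈ s, Multiset.replicate (f i / i) i, ?_, ?_⟩, ?_, ?_⟩
    · intro i hi
      simp only [exists_prop, Multiset.mem_sum, mem_map, Function.Embedding.coeFn_mk] at hi
      rcases hi with ⟨t, ht, z⟩
      apply hs
      rwa [Multiset.eq_of_mem_replicate z]
    · simp_rw [Multiset.sum_sum, Multiset.sum_replicate, Nat.nsmul_eq_mul]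
      rw [← hf₁]
      refine sum_congr rfl fun i hi => Nat.div_mul_cancel ?_
      exact hf₄ i hi
    · intro i hi
      rw [Multiset.mem_sum] at hi
      rcases hi with ⟨j, hj₁, hj₂⟩
      rwa [Multiset.eq_of_mem_replicate hj₂]
    · ext i
      simp only [φ, smul_eq_mul, Finsupp.coe_mk]
      simp_rw [Multiset.count_sum', Multiset.count_replicate, sum_ite_eq']
      split_ifs with h
      · exact Nat.div_mul_cancel (hf₄ i h)
      · rw [zero_mul]
        by_contra hne
        have : i ∈ f.support := Finsupp.mem_support_iff.mpr (fun hz => hne hz.symm)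
        exact h (hf₃ this)
  · intro p hp
    simp only [mem_univ, true_and, mem_filter] at hp
    refine Finset.prod_congr rfl fun i hi => ?_
    simp only [φ, smul_eq_mul, Finsupp.coe_mk]
    rw [Nat.mul_div_cancel _ (hs i hi)]

open PowerSeries in
theorem factor1_eq (m : ℕ) : factor1 (m+1) = Fser (2*m+1) := by
  set b := 2*m+1 with hbdef
  have hb : 0 < b := by omega
  have hu : IsUnit ((1 - X ^ (2*b) : PowerSeries Rxy)^2) := by
    rw [PowerSeries.isUnit_iff_constantCoeff]
    simp [zero_pow, (by omega : 2*b ≠ 0)]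
  have hinv : ((1 - X ^ (2*b) : PowerSeries Rxy)^2) * Ring.inverse ((1 - X^(2*b))^2) = 1 :=
    Ring.mul_inverse_cancel _ hu
  have habs : ∀ A : PowerSeries Rxy,
      ((1 - X ^ (2*b))^2) * (A * Ring.inverse ((1 - X^(2*b))^2)) = A := fun A => by
    rw [mul_comm A, ← mul_assoc, hinv, one_mul]
  apply mul_left_cancel₀ hu.ne_zero
  rw [key_poly b hb, factor1]
  rw [show 4*(m+1)-2 = 2*b by omega, show 2*(m+1)-1 = b by omega]
  rw [mul_add, mul_add, mul_one, habs, habs]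

open Finset PowerSeries in
/-- In `ℤ[x,y][[q]]`:
`∑_λ m(λ) x^{ℓ_d(λ)} y^{ℓ_d^o(λ)} q^{|λ|}
  = ∏_{m≥1} (1 + 2x q^{4m-2}/(1-q^{4m-2})² + xy q^{2m-1}(1+q^{4m-2})/(1-q^{4m-2})²)`. -/
theorem P1_eq_prod : P1 = prod1 := by
  apply PowerSeries.ext; intro n
  rw [P1, prod1, PowerSeries.coeff_mk, PowerSeries.coeff_mk]
  have hprod : ∏ m ∈ Finset.range (n+1), factor1 (m+1)
      = ∏ m ∈ Finset.range (n+1), Fser (2*m+1) :=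
    Finset.prod_congr rfl fun m _ => factor1_eq m
  rw [hprod]
  set s : Finset ℕ := (Finset.range (n+1)).image (fun m => 2*m+1) with hs_def
  have himg : ∏ m ∈ Finset.range (n+1), Fser (2*m+1) = ∏ i ∈ s, Fser i := by
    rw [Finset.prod_image]
    intro a _ b _ h; simp only at h; omega
  rw [himg]
  simp only [Fser]
  rw [weighted_prop n s (fun i hi => by
      simp only [hs_def, Finset.mem_image, Finset.mem_range] at hi
      obtain ⟨m, _, rfl⟩ := hi; omega) wgt (by simp [wgt])]
  have hset : Finset.univ.filter (fun p : n.Partition => ∀ j ∈ p.parts, j ∈ s)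
      = Nat.Partition.odds n := by
    ext p
    simp only [Finset.mem_filter, Finset.mem_univ, true_and, Nat.Partition.odds, Nat.Partition.restricted, hs_def,
      Finset.mem_image, Finset.mem_range]
    constructor
    · intro h j hj
      obtain ⟨m, _, rfl⟩ := h j hj
      rw [Nat.even_iff]; omega
    · intro h j hj
      have hle : j ≤ n := by
        have h1 : j ≤ p.parts.sum := Multiset.single_le_sum (fun x _ => Nat.zero_le x) j hj
        rwa [p.parts_sum] at h1
      have hodd := h j hj
      rw [Nat.even_iff] at hodd
      exact ⟨j/2, by omega, by omega⟩
  rw [hset]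
  symm
  apply Finset.sum_congr rfl
  intro p hp
  have hparts : ∀ j ∈ p.parts, j ∈ s := by
    have := hset ▸ hp
    simpa only [Finset.mem_filter, Finset.mem_univ, true_and] using this
  have hsub : p.parts.toFinset ⊆ s := fun i hi => hparts i (Multiset.mem_toFinset.mp hi)
  rw [← Finset.prod_subset hsub (fun i _ hni => by
      rw [Multiset.count_eq_zero_of_notMem (fun hmem => hni (Multiset.mem_toFinset.mpr hmem))]
      simp [wgt])]
  have hstep : ∀ i ∈ p.parts.toFinset,
      wgt (p.parts.count i) = ((p.parts.count i : Rxy) * xv) * yv ^ (p.parts.count i % 2) := by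
    intro i hi
    have : p.parts.count i ≠ 0 := by
      rw [Ne, Multiset.count_eq_zero, not_not]
      exact Multiset.mem_toFinset.mp hi
    simp only [wgt, if_neg this]
  rw [Finset.prod_congr rfl hstep, Finset.prod_mul_distrib, Finset.prod_mul_distrib]
  have h1 : ∏ i ∈ p.parts.toFinset, (p.parts.count i : Rxy) = (pdoWeight p : Rxy) := by
    rw [pdoWeight, Nat.cast_prod]
  have h2 : ∏ _i ∈ p.parts.toFinset, xv = xv ^ numDistinct p := by
    rw [Finset.prod_const, numDistinct]
  have h3 : ∏ i ∈ p.parts.toFinset, yv ^ (p.parts.count i % 2) = yv ^ numOddDistinct p := by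
    rw [Finset.prod_pow_eq_pow_sum]
    congr 1
    rw [numOddDistinct, Finset.card_filter]
    apply Finset.sum_congr rfl
    intro i _
    split_ifs with h
    · rwa [Nat.odd_iff] at h
    · rw [Nat.odd_iff] at h; omega
  rw [h1, h2, h3]
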